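/- Let Δ be a group and η: Δ → ℤ a ℤ-grading of Δ. Let (x,σ) ∈ M^0_η(Δ). Suppose ξ ∈ Δ* and ξ' ∈ Δ*, σ̃ is an extension of σ to a representation of Z_Δ(x) on which ξ acts as the identity, and σ̃' is an extension of σ to a representation of Z_Δ(x) on which ξ' acts as the identity. Then there exists a root of unity ω ∈ ℂ such that (x,σ)^_{ξ',σ̃'} = ω · (x,σ)^_{ξ,σ̃} in U^1_η(Δ). -/

import Mathlib

open CategoryTheory
open scoped Classical

noncomputable section

/-- The centralizer of an element. -/
abbrev Zd {Δ : Type} [Group Δ] (x : Δ) : Subgroup Δ :=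
  Subgroup.centralizer ({x} : Set Δ)

/-- `Z_Δ(x) ∩ η⁻¹(0)`. -/
abbrev Kd {Δ : Type} [Group Δ] (η : Δ →* Multiplicative ℤ) (x : Δ) : Subgroup Δ :=
  Zd x ⊓ η.ker

lemma mem_Zd_self {Δ : Type} [Group Δ] (x : Δ) : x ∈ Zd x :=
  Subgroup.mem_centralizer_iff.mpr (by rintro g rfl; rfl)

lemma central_mem_Zd {Δ : Type} [Group Δ] {ξ : Δ}
    (hξ : ξ ∈ Subgroup.center Δ) (x : Δ) : ξ ∈ Zd x :=
  Subgroup.mem_centralizer_iff.mpr (by rintro g rfl; exact Subgroup.mem_center_iff.mp hξ g)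

/-- `Δ*`: the set of central elements `ξ` of `Δ` of the form `ξ = y ^ c` with
`y ∈ η⁻¹(1)`, `c ≥ 1`. -/
def DeltaStar {Δ : Type} [Group Δ] (η : Δ →* Multiplicative ℤ) : Set Δ :=
  {ξ | ξ ∈ Subgroup.center Δ ∧
    ∃ (y : Δ) (c : ℕ), η y = Multiplicative.ofAdd 1 ∧ 1 ≤ c ∧ y ^ c = ξ}

/-- Restriction of a finite-dimensional representation along a group homomorphism. -/
def FDRep.res {H K : Type} [Group H] [Group K] (f : H →* K) (σ : FDRep ℂ K) : FDRep ℂ H :=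
  FDRep.of (σ.ρ.comp f)

/-- A pair `(x, τ)` representing an element of `M^i_η(Δ)`: here `x ∈ η⁻¹(i)`, `τ` is an
irreducible representation of `Z_Δ(x) ∩ η⁻¹(0)`, `Z_Δ(x) ∩ η⁻¹(1) ≠ ∅`, and `τ` extends
to a representation of `Z_Δ(x)`. -/
structure PairD {Δ : Type} [Group Δ] (η : Δ →* Multiplicative ℤ) (i : ℤ) where
  x : Δ
  hx : η x = Multiplicative.ofAdd i
  τ : FDRep ℂ ↥(Kd η x)
  irr : Simple τ
  hne : ∃ z ∈ Zd x, η z = Multiplicative.ofAdd 1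
  hext : ∃ ρ' : Representation ℂ ↥(Zd x) τ,
    ∀ t : ↥(Kd η x), ρ' (Subgroup.inclusion inf_le_left t) = τ.ρ t

/-- Conjugation `z ↦ v⁻¹ z v`, as a homomorphism `Z_Δ(v x v⁻¹) ∩ η⁻¹(0) →* Z_Δ(x) ∩ η⁻¹(0)`. -/
def conjHomK {Δ : Type} [Group Δ] (η : Δ →* Multiplicative ℤ) (v x x' : Δ)
    (h : x' = v * x * v⁻¹) : ↥(Kd η x') →* ↥(Kd η x) where
  toFun z := ⟨v⁻¹ * (z : Δ) * v, by
    rcases z.2 with ⟨hz1, hz2⟩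
    constructor
    · subst h
      have hz : (v * x * v⁻¹) * (z : Δ) = (z : Δ) * (v * x * v⁻¹) :=
        Subgroup.mem_centralizer_iff.mp hz1 _ rfl
      refine Subgroup.mem_centralizer_iff.mpr ?_
      rintro g rfl
      have := congrArg (fun t => v⁻¹ * t * v) hz
      simpa [mul_assoc] using this
    · have : η (z : Δ) = 1 := hz2
      simp [MonoidHom.mem_ker, this]⟩
  map_one' := by ext; simp
  map_mul' z w := by ext; simp [mul_assoc]

/-- The equivalence `(x,τ) ∼ (v x v⁻¹, ᵛτ)` on pairs. -/
def pairRelD {Δ : Type} [Group Δ] (η : Δ →* Multiplicative ℤ) (i : ℤ)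
    (p p' : PairD η i) : Prop :=
  ∃ (v : Δ) (h : p'.x = v * p.x * v⁻¹),
    Nonempty (p'.τ ≅ FDRep.res (conjHomK η v p.x p'.x h) p.τ)

/-- `M^i_η(Δ)`: pairs modulo the conjugation equivalence. -/
abbrev MD {Δ : Type} [Group Δ] (η : Δ →* Multiplicative ℤ) (i : ℤ) : Type 1 :=
  Quot (pairRelD η i)

/-- `U^i_η(Δ)`: the vector space with basis `M^i_η(Δ)`. -/
abbrev UD {Δ : Type} [Group Δ] (η : Δ →* Multiplicative ℤ) (i : ℤ) : Type 1 :=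
  MD η i → ℂ

/-- The trace function of a representation of `Z_Δ(x)`, extended by zero to `Δ`. -/
def repTrace {Δ : Type} [Group Δ] (x : Δ) {W : Type} [AddCommGroup W] [Module ℂ W]
    (ρ : Representation ℂ ↥(Zd x) W) : Δ → ℂ :=
  fun g => if h : g ∈ Zd x then LinearMap.trace ℂ W (ρ ⟨g, h⟩) else 0

/-- For a pair `(y,τ) ∈ M^1_η(Δ)`, the trace function of the representation `τ̃` of
`Z_Δ(y)` extending `τ` on which `y` acts as the identity, extended by zero to `Δ`. -/
def tExtTrace {Δ : Type} [Group Δ] (η : Δ →* Multiplicative ℤ) (p : PairD η 1) : Δ → ℂ :=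
  if h : ∃ ρ' : Representation ℂ ↥(Zd p.x) p.τ,
      (∀ t : ↥(Kd η p.x), ρ' (Subgroup.inclusion inf_le_left t) = p.τ.ρ t) ∧
      ρ' ⟨p.x, mem_Zd_self p.x⟩ = 1
  then repTrace p.x h.choose
  else fun _ => 0

/-- The element `(x,σ)^_{ξ,σ̃} ∈ U^1_η(Δ)`, i.e. the formal sum
`Σ_{(y,τ) ∈ M^1_η(Δ)} Σ_{w ∈ Δ/⟨ξ⟩, x(wyw⁻¹)=(wyw⁻¹)x} η(ξ) |Z_Δ(x)/⟨ξ⟩|⁻¹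
|Z_Δ(y)/⟨ξ⟩|⁻¹ tr(w⁻¹x⁻¹w, τ̃) tr(wyw⁻¹, σ̃) (y,τ)`. -/
def hatFn {Δ : Type} [Group Δ] (η : Δ →* Multiplicative ℤ) (x : Δ) (ξ : Δ)
    (hξ : ξ ∈ Subgroup.center Δ) {W : Type} [AddCommGroup W] [Module ℂ W]
    (σt : Representation ℂ ↥(Zd x) W) : UD η 1 :=
  fun m =>
    ∑ᶠ w : Δ ⧸ Subgroup.zpowers ξ,
      if x * (w.out * m.out.x * w.out⁻¹) = (w.out * m.out.x * w.out⁻¹) * x then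
        ((Multiplicative.toAdd (η ξ) : ℤ) : ℂ) *
          (Nat.card (↥(Zd x) ⧸ Subgroup.zpowers
            (⟨ξ, central_mem_Zd hξ x⟩ : ↥(Zd x))) : ℂ)⁻¹ *
          (Nat.card (↥(Zd m.out.x) ⧸ Subgroup.zpowers
            (⟨ξ, central_mem_Zd hξ m.out.x⟩ : ↥(Zd m.out.x))) : ℂ)⁻¹ *
          tExtTrace η m.out (w.out⁻¹ * x⁻¹ * w.out) *
          repTrace x σt (w.out * m.out.x * w.out⁻¹)
      else 0

end


lemma eta_eq_one_of_toAdd {G : Type} [Group G] (η : G →* Multiplicative ℤ) (u : G)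
    (h : Multiplicative.toAdd (η u) = 0) : η u = 1 := by
  have := congrArg Multiplicative.ofAdd h
  simpa using this

lemma zpow_eta_inj {G : Type} [Group G] (η : G →* Multiplicative ℤ) (ξ : G) (c : ℤ)
    (hc : η ξ = Multiplicative.ofAdd c) (hc1 : 1 ≤ c) {m n : ℤ} (h : ξ ^ m = ξ ^ n) :
    m = n := by
  have h2 := congrArg (fun t => Multiplicative.toAdd (η t)) h
  simp only [map_zpow, hc, toAdd_zpow, toAdd_ofAdd, smul_eq_mul] at h2
  have : c ≠ 0 := by omega
  exact mul_right_cancel₀ this h2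

lemma quot_zpowers_finite {G : Type} [Group G] (η : G →* Multiplicative ℤ)
    (hker : Finite η.ker) (ξ z : G) (c : ℤ) (hc : η ξ = Multiplicative.ofAdd c)
    (hc1 : 1 ≤ c) (hz : η z = Multiplicative.ofAdd 1)
    (hcen : ∀ a : G, ξ * a = a * ξ) :
    Finite (G ⧸ Subgroup.zpowers ξ) := by
  have hsurj : Function.Surjective
      (fun p : η.ker × Fin c.toNat =>
        (QuotientGroup.mk ((p.1 : G) * z ^ (p.2 : ℕ)) : G ⧸ Subgroup.zpowers ξ)) := by
    intro w
    obtain ⟨g, rfl⟩ := QuotientGroup.mk_surjective w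
    set m : ℤ := Multiplicative.toAdd (η g) with hm
    set q : ℤ := m / c with hq
    set r : ℤ := m % c with hr
    have hr0 : 0 ≤ r := Int.emod_nonneg m (by omega)
    have hrc : r < c := Int.emod_lt_of_pos m (by omega)
    have hmqr : c * q + r = m := Int.mul_ediv_add_emod m c
    have hqc : -q * c = -(c * q) := by ring
    have hk : g * z ^ (-r) * ξ ^ (-q) ∈ η.ker := by
      rw [MonoidHom.mem_ker]
      apply eta_eq_one_of_toAdd
      simp only [map_mul, map_zpow, hc, hz, toAdd_mul, toAdd_zpow, toAdd_ofAdd, smul_eq_mul, ← hm]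
      omega
    refine ⟨⟨⟨_, hk⟩, ⟨r.toNat, by omega⟩⟩, ?_⟩
    simp only []
    have h1 : (g * z ^ (-r) * ξ ^ (-q) : G) * z ^ (r.toNat : ℕ) = g * ξ ^ (-q) := by
      have hco : Commute ξ z := hcen z
      have hco2 : ξ ^ (-q) * z ^ (r.toNat : ℕ) = z ^ (r.toNat : ℕ) * ξ ^ (-q) :=
        (Commute.zpow_left (Commute.pow_right hco r.toNat) (-q)).eq
      rw [mul_assoc, hco2, ← mul_assoc, mul_assoc g, ← zpow_natCast z r.toNat,
        Int.toNat_of_nonneg hr0, zpow_neg, inv_mul_cancel, mul_one]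
    rw [h1]
    have h2 : ξ ^ (-q) ∈ Subgroup.zpowers ξ := Subgroup.zpow_mem _ (Subgroup.mem_zpowers ξ) _
    exact QuotientGroup.mk_mul_of_mem g h2
  exact Finite.of_surjective _ hsurj

lemma f_zpow_invariant {G : Type} [Group G] (ξ : G) (f : G → ℂ)
    (hf : ∀ g : G, f (g * ξ) = f g) : ∀ (g : G) (j : ℤ), f (g * ξ ^ j) = f g := by
  have hinv : ∀ g : G, f (g * ξ⁻¹) = f g := by
    intro g
    have := hf (g * ξ⁻¹)
    rw [mul_assoc, inv_mul_cancel, mul_one] at this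
    exact this.symm
  intro g j
  induction j using Int.induction_on with
  | zero => simp
  | succ n ih =>
      have : g * ξ ^ ((n : ℤ) + 1) = (g * ξ ^ (n : ℤ)) * ξ := by
        rw [zpow_add_one, mul_assoc]
      rw [this, hf, ih]
  | pred n ih =>
      have : g * ξ ^ (-(n : ℤ) - 1) = (g * ξ ^ (-(n : ℤ))) * ξ⁻¹ := by
        rw [zpow_sub_one, mul_assoc]
      rw [this, hinv, ih]

lemma finsum_quot_pow {G : Type} [Group G] (ξ : G) (k : ℕ) (hk : 1 ≤ k)
    (hord : ∀ m n : ℤ, ξ ^ m = ξ ^ n → m = n)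
    [Finite (G ⧸ Subgroup.zpowers ξ)] [Finite (G ⧸ Subgroup.zpowers (ξ ^ k))]
    (f : G → ℂ) (hf : ∀ g : G, f (g * ξ) = f g) :
    ∑ᶠ w : G ⧸ Subgroup.zpowers (ξ ^ k), f w.out
      = (k : ℂ) * ∑ᶠ w : G ⧸ Subgroup.zpowers ξ, f w.out := by
  haveI : NeZero k := ⟨by omega⟩
  have hfz := f_zpow_invariant ξ f hf
  set H := Subgroup.zpowers ξ
  set H' := Subgroup.zpowers (ξ ^ k)
  -- the map ψ
  set ψ : (G ⧸ H) × ZMod k → G ⧸ H' :=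
    fun p => (QuotientGroup.mk (p.1.out * ξ ^ (p.2.val : ℕ)) : G ⧸ H') with hψ
  have hinj : Function.Injective ψ := by
    rintro ⟨u, i⟩ ⟨v, j⟩ h
    simp only [hψ] at h
    rw [QuotientGroup.eq] at h
    obtain ⟨q, hq⟩ := h
    simp only at hq
    -- hq : (ξ ^ k) ^ q = (u.out * ξ ^ i.val)⁻¹ * (v.out * ξ ^ j.val)
    have hv : v.out = u.out * ξ ^ ((i.val : ℤ) + k * q - j.val) := by
      have : (u.out * ξ ^ (i.val : ℕ)) * (ξ ^ k) ^ q = v.out * ξ ^ (j.val : ℕ) := by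
        rw [hq]; group
      calc v.out = (v.out * ξ ^ (j.val : ℕ)) * (ξ ^ (j.val : ℕ))⁻¹ := by group
        _ = (u.out * ξ ^ (i.val : ℕ)) * (ξ ^ k) ^ q * (ξ ^ (j.val : ℕ))⁻¹ := by rw [this]
        _ = u.out * ξ ^ ((i.val : ℤ) + k * q - j.val) := by
            rw [← zpow_natCast ξ i.val, ← zpow_natCast ξ j.val, ← zpow_natCast ξ k,
              ← zpow_mul]
            rw [mul_assoc, mul_assoc, ← zpow_neg, ← zpow_add, ← zpow_add]
            ring_nf
    have huv : u = v := by
      have : (v.out : G ⧸ H) = (u.out : G ⧸ H) := by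
        rw [hv]
        exact QuotientGroup.mk_mul_of_mem u.out (Subgroup.zpow_mem _ (Subgroup.mem_zpowers ξ) _)
      rw [QuotientGroup.out_eq', QuotientGroup.out_eq'] at this
      exact this.symm
    subst huv
    have hxx : ξ ^ (0:ℤ) = ξ ^ ((i.val : ℤ) + k * q - j.val) := by
      have h2 := hv
      rw [left_eq_mul] at h2
      rw [zpow_zero, h2]
    have h3 : (0:ℤ) = (i.val : ℤ) + k * q - j.val := hord _ _ hxx
    have h4 : (j.val : ℤ) = (i.val : ℤ) + k * q := by omega
    have h5 : (j : ZMod k) = i := by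
      have := congrArg (fun t : ℤ => (t : ZMod k)) h4
      push_cast at this
      simp only [ZMod.natCast_self, zero_mul, add_zero] at this
      rwa [ZMod.natCast_val, ZMod.natCast_val, ZMod.cast_id, ZMod.cast_id] at this
    simp [h5]
  have hsurjψ : Function.Surjective ψ := by
    intro w
    set g := w.out with hg
    set u : G ⧸ H := (QuotientGroup.mk g : G ⧸ H) with hu
    have h0 : (QuotientGroup.mk u.out : G ⧸ H) = QuotientGroup.mk g := by
      rw [QuotientGroup.out_eq']
    rw [QuotientGroup.eq] at h0
    obtain ⟨j, hj⟩ := h0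
    have hj' : ξ ^ j = u.out⁻¹ * g := hj
    have hgj : g = u.out * ξ ^ j := by rw [hj']; group
    set r : ℤ := j % k with hr
    set q : ℤ := j / k with hq2
    have hr0 : 0 ≤ r := Int.emod_nonneg j (by positivity)
    have hrk : r < k := Int.emod_lt_of_pos j (by positivity)
    have hqe : k * q + r = j := by rw [hq2, hr]; exact Int.mul_ediv_add_emod j k
    refine ⟨⟨u, (r.toNat : ZMod k)⟩, ?_⟩
    simp only [hψ]
    have hval : ((r.toNat : ZMod k)).val = r.toNat := ZMod.val_natCast_of_lt (by omega)
    rw [hval]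
    have hsplit : u.out * ξ ^ j = (u.out * ξ ^ (r.toNat : ℕ)) * (ξ ^ k) ^ q := by
      rw [mul_assoc, ← zpow_natCast ξ r.toNat, Int.toNat_of_nonneg hr0,
        ← zpow_natCast ξ k, ← zpow_mul, ← zpow_add]
      congr 1
      congr 1
      omega
    have h1 : (QuotientGroup.mk (u.out * ξ ^ (r.toNat : ℕ)) : G ⧸ H') = QuotientGroup.mk (u.out * ξ ^ j) := by
      conv_rhs => rw [hsplit]
      exact (QuotientGroup.mk_mul_of_mem _ (Subgroup.zpow_mem _ (Subgroup.mem_zpowers _) q)).symm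
    rw [h1, ← hgj, hg, QuotientGroup.out_eq']
  set e : ((G ⧸ H) × ZMod k) ≃ (G ⧸ H') := Equiv.ofBijective ψ ⟨hinj, hsurjψ⟩ with he
  haveI : Fintype (G ⧸ H) := Fintype.ofFinite _
  haveI : Fintype (G ⧸ H') := Fintype.ofFinite _
  have key : ∀ p : (G ⧸ H) × ZMod k, f (e p).out = f p.1.out := by
    rintro ⟨u, i⟩
    have h0 : (QuotientGroup.mk (e (u, i)).out : G ⧸ H') = QuotientGroup.mk (u.out * ξ ^ ((i.val : ℕ))) := by
      rw [QuotientGroup.out_eq']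
      rfl
    rw [QuotientGroup.eq] at h0
    obtain ⟨q, hq⟩ := h0
    have hq' : (ξ ^ k) ^ q = ((e (u, i)).out)⁻¹ * (u.out * ξ ^ (i.val : ℕ)) := hq
    have h3 : (e (u, i)).out * (ξ ^ k) ^ q = u.out * ξ ^ (i.val : ℕ) := by
      rw [hq']; group
    have h2 : (e (u, i)).out = u.out * ξ ^ ((i.val : ℤ) - k * q) := by
      calc (e (u, i)).out = ((e (u, i)).out * (ξ ^ k) ^ q) * ((ξ ^ k) ^ q)⁻¹ := by group
        _ = u.out * ξ ^ (i.val : ℕ) * ((ξ ^ k) ^ q)⁻¹ := by rw [h3]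
        _ = u.out * ξ ^ ((i.val : ℤ) - k * q) := by
            rw [← zpow_natCast ξ i.val, ← zpow_natCast ξ k, ← zpow_mul, ← zpow_neg,
              mul_assoc, ← zpow_add, sub_eq_add_neg]
    rw [h2, hfz]
  rw [finsum_eq_sum_of_fintype, finsum_eq_sum_of_fintype,
    ← Equiv.sum_comp e (fun w => f w.out), Fintype.sum_prod_type]
  have hrow : ∀ u : G ⧸ H, (∑ i : ZMod k, f (e (u, i)).out) = (k : ℂ) * f u.out := by
    intro u
    rw [show (∑ i : ZMod k, f (e (u, i)).out) = ∑ _i : ZMod k, f u.out from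
      Finset.sum_congr rfl fun i _ => key (u, i)]
    rw [Finset.sum_const, Finset.card_univ, ZMod.card k, nsmul_eq_mul]
  simp only [hrow]
  rw [← Finset.mul_sum]

lemma card_quot_pow {G : Type} [Group G] (ξ : G) (k : ℕ) (hk : 1 ≤ k)
    (hord : ∀ m n : ℤ, ξ ^ m = ξ ^ n → m = n)
    [Finite (G ⧸ Subgroup.zpowers ξ)] [Finite (G ⧸ Subgroup.zpowers (ξ ^ k))] :
    (Nat.card (G ⧸ Subgroup.zpowers (ξ ^ k)) : ℂ)
      = (k : ℂ) * (Nat.card (G ⧸ Subgroup.zpowers ξ) : ℂ) := by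
  have h := finsum_quot_pow ξ k hk hord (fun _ => (1 : ℂ)) (fun _ => rfl)
  haveI : Fintype (G ⧸ Subgroup.zpowers ξ) := Fintype.ofFinite _
  haveI : Fintype (G ⧸ Subgroup.zpowers (ξ ^ k)) := Fintype.ofFinite _
  rw [finsum_eq_sum_of_fintype, finsum_eq_sum_of_fintype, Finset.sum_const, Finset.sum_const,
    Finset.card_univ, Finset.card_univ, nsmul_eq_mul, nsmul_eq_mul, mul_one, mul_one] at h
  rw [Nat.card_eq_fintype_card, Nat.card_eq_fintype_card, h]

section AuxHat
open scoped Classical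

lemma hatFn_pow {Δ : Type} [Group Δ] (η : Δ →* Multiplicative ℤ)
    (hker : Finite η.ker) (x z : Δ) (hz : z ∈ Zd x) (hz1 : η z = Multiplicative.ofAdd 1)
    (ξ : Δ) (hcent : ξ ∈ Subgroup.center Δ)
    (c : ℤ) (hc : η ξ = Multiplicative.ofAdd c) (hc1 : 1 ≤ c)
    (k : ℕ) (hk : 1 ≤ k) (ζ : Δ) (hζ : ζ = ξ ^ k) (hζc : ζ ∈ Subgroup.center Δ)
    {W : Type} [AddCommGroup W] [Module ℂ W] (σt : Representation ℂ ↥(Zd x) W) :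
    hatFn η x ζ hζc σt = hatFn η x ξ hcent σt := by
  subst hζ
  have hcenΔ : ∀ a : Δ, ξ * a = a * ξ := fun a => (Subgroup.mem_center_iff.mp hcent a).symm
  have hkc1 : 1 ≤ (k : ℤ) * c := by nlinarith [Int.toNat_of_nonneg (by omega : (0:ℤ) ≤ (k:ℤ))]
  have hck : η (ξ ^ k) = Multiplicative.ofAdd ((k : ℤ) * c) := by
    rw [map_pow, hc]
    rw [show ((k:ℤ) * c) = k • c by simp [nsmul_eq_mul]]
    rw [ofAdd_nsmul]
  have hord : ∀ m n : ℤ, ξ ^ m = ξ ^ n → m = n := fun m n h => zpow_eta_inj η ξ c hc hc1 h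
  haveI instΔξ : Finite (Δ ⧸ Subgroup.zpowers ξ) :=
    quot_zpowers_finite η hker ξ z c hc hc1 hz1 hcenΔ
  haveI instΔζ : Finite (Δ ⧸ Subgroup.zpowers (ξ ^ k)) :=
    quot_zpowers_finite η hker (ξ ^ k) z ((k:ℤ)*c) hck hkc1 hz1
      (fun a => (Subgroup.mem_center_iff.mp hζc a).symm)
  -- subgroup-level data, for an arbitrary point u with a degree-one element
  have subgrp : ∀ (u : Δ) (zu : Δ) (hzu : zu ∈ Zd u) (hzu1 : η zu = Multiplicative.ofAdd 1)
      (hmem : ξ ∈ Zd u) (hmem' : ξ ^ k ∈ Zd u),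
      Finite (↥(Zd u) ⧸ Subgroup.zpowers (⟨ξ, hmem⟩ : ↥(Zd u))) ∧
      Finite (↥(Zd u) ⧸ Subgroup.zpowers ((⟨ξ, hmem⟩ : ↥(Zd u)) ^ k)) ∧
      (∀ m n : ℤ, (⟨ξ, hmem⟩ : ↥(Zd u)) ^ m = (⟨ξ, hmem⟩ : ↥(Zd u)) ^ n → m = n) := by
    intro u zu hzu hzu1 hmem hmem'
    set ηu : ↥(Zd u) →* Multiplicative ℤ := η.comp (Zd u).subtype with hηu
    have hkeru : Finite ηu.ker := by
      apply Finite.of_injective (fun v : ηu.ker => (⟨((v : ↥(Zd u)) : Δ), v.2⟩ : η.ker))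
      intro a b hab
      simp only [Subtype.mk.injEq] at hab
      have hab' := congrArg Subtype.val hab; exact Subtype.ext (Subtype.ext hab')
    have hcenu : ∀ a : ↥(Zd u), (⟨ξ, hmem⟩ : ↥(Zd u)) * a = a * ⟨ξ, hmem⟩ :=
      fun a => Subtype.ext (hcenΔ a)
    have hpow : ((⟨ξ, hmem⟩ : ↥(Zd u)) ^ k) = ⟨ξ ^ k, hmem'⟩ := by
      ext
      simp
    refine ⟨quot_zpowers_finite ηu hkeru ⟨ξ, hmem⟩ ⟨zu, hzu⟩ c hc hc1 hzu1 hcenu,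
      ?_, ?_⟩
    · rw [hpow]
      exact quot_zpowers_finite ηu hkeru ⟨ξ ^ k, hmem'⟩ ⟨zu, hzu⟩ ((k:ℤ)*c) hck hkc1 hzu1
        (fun a => Subtype.ext ((Subgroup.mem_center_iff.mp hζc a).symm))
    · intro m n h
      apply hord m n
      have := congrArg (fun t : ↥(Zd u) => (t : Δ)) h
      simpa using this
  funext m
  set y := m.out.x with hyy
  have hy : η y = Multiplicative.ofAdd 1 := m.out.hx
  obtain ⟨finx, finx', ordx⟩ := subgrp x z hz hz1 (central_mem_Zd hcent x) (central_mem_Zd hζc x)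
  obtain ⟨finy, finy', ordy⟩ := subgrp y y (mem_Zd_self y) hy (central_mem_Zd hcent y)
    (central_mem_Zd hζc y)
  haveI := finx; haveI := finx'; haveI := finy; haveI := finy'
  -- the common coset function
  set f : Δ → ℂ := fun g =>
    if x * (g * y * g⁻¹) = (g * y * g⁻¹) * x then
      tExtTrace η m.out (g⁻¹ * x⁻¹ * g) * repTrace x σt (g * y * g⁻¹)
    else 0 with hf
  have hfinv : ∀ g : Δ, f (g * ξ) = f g := by
    intro g
    have h1 : g * ξ * y * (g * ξ)⁻¹ = g * y * g⁻¹ := by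
      rw [mul_inv_rev]
      have : ξ * y * ξ⁻¹ = y := by rw [hcenΔ y]; group
      calc g * ξ * y * (ξ⁻¹ * g⁻¹) = g * (ξ * y * ξ⁻¹) * g⁻¹ := by group
        _ = g * y * g⁻¹ := by rw [this]
    have h2 : (g * ξ)⁻¹ * x⁻¹ * (g * ξ) = g⁻¹ * x⁻¹ * g := by
      rw [mul_inv_rev]
      have ht := hcenΔ (g⁻¹ * x⁻¹ * g)
      have : ξ⁻¹ * (g⁻¹ * x⁻¹ * g) * ξ = g⁻¹ * x⁻¹ * g := by
        rw [mul_assoc ξ⁻¹, ← ht]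
        group
      calc ξ⁻¹ * g⁻¹ * x⁻¹ * (g * ξ) = ξ⁻¹ * (g⁻¹ * x⁻¹ * g) * ξ := by group
        _ = g⁻¹ * x⁻¹ * g := this
    rw [hf]
    simp only [h1, h2]
  -- cardinality abbreviations
  set ax : ℂ := (Nat.card (↥(Zd x) ⧸ Subgroup.zpowers
      (⟨ξ, central_mem_Zd hcent x⟩ : ↥(Zd x))) : ℂ) with hax
  set ay : ℂ := (Nat.card (↥(Zd y) ⧸ Subgroup.zpowers
      (⟨ξ, central_mem_Zd hcent y⟩ : ↥(Zd y))) : ℂ) with hay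
  have hpowx : ((⟨ξ ^ k, central_mem_Zd hζc x⟩ : ↥(Zd x)))
      = (⟨ξ, central_mem_Zd hcent x⟩ : ↥(Zd x)) ^ k := by ext; simp
  have hpowy : ((⟨ξ ^ k, central_mem_Zd hζc y⟩ : ↥(Zd y)))
      = (⟨ξ, central_mem_Zd hcent y⟩ : ↥(Zd y)) ^ k := by ext; simp
  have hcardx : (Nat.card (↥(Zd x) ⧸ Subgroup.zpowers
      (⟨ξ ^ k, central_mem_Zd hζc x⟩ : ↥(Zd x))) : ℂ) = (k : ℂ) * ax := by
    rw [hpowx]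
    exact card_quot_pow _ k hk ordx
  have hcardy : (Nat.card (↥(Zd y) ⧸ Subgroup.zpowers
      (⟨ξ ^ k, central_mem_Zd hζc y⟩ : ↥(Zd y))) : ℂ) = (k : ℂ) * ay := by
    rw [hpowy]
    exact card_quot_pow _ k hk ordy
  have hsum := finsum_quot_pow ξ k hk hord f hfinv
  -- rewrite both hat values
  have hk0 : (k : ℂ) ≠ 0 := by
    simp only [ne_eq, Nat.cast_eq_zero]
    omega
  have hLHS : ∀ (w : Δ ⧸ Subgroup.zpowers (ξ ^ k)),
      (if x * (w.out * m.out.x * w.out⁻¹) = (w.out * m.out.x * w.out⁻¹) * x then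
        ((Multiplicative.toAdd (η (ξ ^ k)) : ℤ) : ℂ) *
          (Nat.card (↥(Zd x) ⧸ Subgroup.zpowers
            (⟨ξ ^ k, central_mem_Zd hζc x⟩ : ↥(Zd x))) : ℂ)⁻¹ *
          (Nat.card (↥(Zd m.out.x) ⧸ Subgroup.zpowers
            (⟨ξ ^ k, central_mem_Zd hζc m.out.x⟩ : ↥(Zd m.out.x))) : ℂ)⁻¹ *
          tExtTrace η m.out (w.out⁻¹ * x⁻¹ * w.out) *
          repTrace x σt (w.out * m.out.x * w.out⁻¹)
      else 0)
      = ((((k:ℤ) * c : ℤ) : ℂ) * ((k : ℂ) * ax)⁻¹ * ((k : ℂ) * ay)⁻¹) * f w.out := by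
    intro w
    have hcardy' : (Nat.card (↥(Zd m.out.x) ⧸ Subgroup.zpowers
        (⟨ξ ^ k, central_mem_Zd hζc m.out.x⟩ : ↥(Zd m.out.x))) : ℂ) = (k : ℂ) * ay := hcardy
    simp only [hf, ← hyy, hck, toAdd_ofAdd, hcardx, hcardy']
    split_ifs with h
    · ring
    · ring
  have hRHS : ∀ (w : Δ ⧸ Subgroup.zpowers ξ),
      (if x * (w.out * m.out.x * w.out⁻¹) = (w.out * m.out.x * w.out⁻¹) * x then
        ((Multiplicative.toAdd (η ξ) : ℤ) : ℂ) *
          (Nat.card (↥(Zd x) ⧸ Subgroup.zpowers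
            (⟨ξ, central_mem_Zd hcent x⟩ : ↥(Zd x))) : ℂ)⁻¹ *
          (Nat.card (↥(Zd m.out.x) ⧸ Subgroup.zpowers
            (⟨ξ, central_mem_Zd hcent m.out.x⟩ : ↥(Zd m.out.x))) : ℂ)⁻¹ *
          tExtTrace η m.out (w.out⁻¹ * x⁻¹ * w.out) *
          repTrace x σt (w.out * m.out.x * w.out⁻¹)
      else 0)
      = (((c : ℤ) : ℂ) * ax⁻¹ * ay⁻¹) * f w.out := by
    intro w
    simp only [hf, ← hyy, hc, toAdd_ofAdd, ← hax, ← hay]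
    split_ifs with h
    · ring
    · ring
  have e1 : hatFn η x (ξ ^ k) hζc σt m
      = ((((k:ℤ) * c : ℤ) : ℂ) * ((k : ℂ) * ax)⁻¹ * ((k : ℂ) * ay)⁻¹)
          * ∑ᶠ w : Δ ⧸ Subgroup.zpowers (ξ ^ k), f w.out := by
    rw [mul_finsum _ _]
    simp only [hatFn]
    exact finsum_congr hLHS
  have e2 : hatFn η x ξ hcent σt m
      = (((c : ℤ) : ℂ) * ax⁻¹ * ay⁻¹) * ∑ᶠ w : Δ ⧸ Subgroup.zpowers ξ, f w.out := by
    rw [mul_finsum _ _]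
    simp only [hatFn]
    exact finsum_congr hRHS
  have h1 : (k:ℂ) * (k:ℂ)⁻¹ = 1 := mul_inv_cancel₀ hk0
  have hscal :
      ((((k:ℤ) * c : ℤ) : ℂ) * ((k : ℂ) * ax)⁻¹ * ((k : ℂ) * ay)⁻¹)
        * ((k : ℂ) * ∑ᶠ w : Δ ⧸ Subgroup.zpowers ξ, f w.out)
      = (((c : ℤ) : ℂ) * ax⁻¹ * ay⁻¹) * ∑ᶠ w : Δ ⧸ Subgroup.zpowers ξ, f w.out := by
    set S : ℂ := ∑ᶠ w : Δ ⧸ Subgroup.zpowers ξ, f w.out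
    rw [mul_inv, mul_inv]
    push_cast
    linear_combination (((c:ℂ)) * ax⁻¹ * ay⁻¹ * S * ((k:ℂ) * (k:ℂ)⁻¹ + 1)) * h1
  rw [e1, e2, hsum, hscal]

end AuxHat

section Schur
open scoped Classical

lemma eta_conj {Δ : Type} [Group Δ] (η : Δ →* Multiplicative ℤ) (g a : Δ) :
    η (g * a * g⁻¹) = η a := by
  rw [map_mul, map_mul, map_inv, mul_comm (η g) (η a), mul_assoc, mul_inv_cancel, mul_one]

lemma schur_mu {Δ : Type} [Group Δ] (η : Δ →* Multiplicative ℤ) (p : PairD η 0)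
    (σt σt' : Representation ℂ ↥(Zd p.x) ↥p.τ)
    (hσt_ext : ∀ t : ↥(Kd η p.x), σt (Subgroup.inclusion inf_le_left t) = p.τ.ρ t)
    (hσt'_ext : ∀ t : ↥(Kd η p.x), σt' (Subgroup.inclusion inf_le_left t) = p.τ.ρ t) :
    ∃ μ : ↥(Zd p.x) → ℂ,
      (∀ g, σt' g = μ g • σt g) ∧
      (∀ g h, μ (g * h) = μ g * μ h) ∧
      (∀ g₁ g₂ : ↥(Zd p.x), η (g₁ : Δ) = η (g₂ : Δ) → μ g₁ = μ g₂) ∧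
      μ 1 = 1 ∧
      (∀ (a b : ℂ) (g : ↥(Zd p.x)), a • σt g = b • σt g → a = b) := by
  haveI := p.irr
  have hnt : Nontrivial ↥p.τ := by
    rw [← not_subsingleton_iff_nontrivial]
    intro h
    apply CategoryTheory.id_nonzero p.τ
    apply Action.hom_ext
    haveI : Subsingleton ↑p.τ.V.obj := h
    exact ObjectProperty.hom_ext _ (ModuleCat.hom_ext (LinearMap.ext fun v => Subsingleton.elim _ _))
  have hcancel : ∀ (a b : ℂ) (g : ↥(Zd p.x)), a • σt g = b • σt g → a = b := by
    intro a b g hab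
    obtain ⟨v, hv⟩ := exists_ne (0 : ↥p.τ)
    have hgv : σt g v ≠ 0 := by
      intro h0
      apply hv
      have hone : σt g⁻¹ * σt g = 1 := by rw [← map_mul, inv_mul_cancel, map_one]
      have h1 : σt g⁻¹ (σt g v) = v := by
        calc σt g⁻¹ (σt g v) = (σt g⁻¹ * σt g) v := rfl
          _ = v := by rw [hone]; rfl
      rw [← h1, h0, map_zero]
    have h2 : a • σt g v = b • σt g v := by
      calc a • σt g v = (a • σt g) v := rfl
        _ = (b • σt g) v := by rw [hab]
        _ = b • σt g v := rfl
    have h3 : (a - b) • σt g v = 0 := by rw [sub_smul, h2, sub_self]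
    rcases smul_eq_zero.mp h3 with h4 | h4
    · exact sub_eq_zero.mp h4
    · exact absurd h4 hgv
  have key : ∀ g : ↥(Zd p.x), ∃ μ : ℂ, σt' g = μ • σt g := by
    intro g
    have hconj : ∀ t : ↥(Kd η p.x), ((g : Δ)⁻¹ * (t : Δ) * g) ∈ Kd η p.x := by
      intro t
      have ht1 : (t : Δ) ∈ Zd p.x := t.2.1
      have ht2 : η (t : Δ) = 1 := t.2.2
      refine ⟨Subgroup.mul_mem _ (Subgroup.mul_mem _ (Subgroup.inv_mem _ g.2) ht1) g.2, ?_⟩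
      show η ((g : Δ)⁻¹ * (t : Δ) * g) = 1
      have heq : ((g : Δ)⁻¹ * (t : Δ) * g) = (g : Δ)⁻¹ * (t : Δ) * ((g : Δ)⁻¹)⁻¹ := by
        group
      rw [heq, eta_conj η _ (t : Δ)]
      exact ht2
    have e1 : ∀ t : ↥(Kd η p.x),
        σt g⁻¹ * p.τ.ρ t = p.τ.ρ ⟨(g : Δ)⁻¹ * (t : Δ) * g, hconj t⟩ * σt g⁻¹ := by
      intro t
      rw [← hσt_ext t, ← hσt_ext ⟨_, hconj t⟩, ← map_mul, ← map_mul]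
      congr 1
      ext
      simp only [Subgroup.coe_mul, Subgroup.coe_inclusion, InvMemClass.coe_inv]
      group
    have e2 : ∀ t : ↥(Kd η p.x),
        σt' g * p.τ.ρ ⟨(g : Δ)⁻¹ * (t : Δ) * g, hconj t⟩ = p.τ.ρ t * σt' g := by
      intro t
      rw [← hσt'_ext t, ← hσt'_ext ⟨_, hconj t⟩, ← map_mul, ← map_mul]
      congr 1
      ext
      simp only [Subgroup.coe_mul, Subgroup.coe_inclusion, InvMemClass.coe_inv]
      group
    set A : Module.End ℂ ↥p.τ := σt' g * σt g⁻¹ with hA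
    have hcomm : ∀ t : ↥(Kd η p.x), A * p.τ.ρ t = p.τ.ρ t * A := by
      intro t
      calc A * p.τ.ρ t = σt' g * (σt g⁻¹ * p.τ.ρ t) := by rw [hA, mul_assoc]
        _ = σt' g * (p.τ.ρ ⟨(g : Δ)⁻¹ * (t : Δ) * g, hconj t⟩ * σt g⁻¹) := by rw [e1 t]
        _ = (σt' g * p.τ.ρ ⟨(g : Δ)⁻¹ * (t : Δ) * g, hconj t⟩) * σt g⁻¹ :=
            (mul_assoc _ _ _).symm
        _ = (p.τ.ρ t * σt' g) * σt g⁻¹ := by rw [e2 t]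
        _ = p.τ.ρ t * A := by rw [hA, mul_assoc]
    let F : p.τ ⟶ p.τ := ⟨InducedCategory.homMk (ModuleCat.ofHom A), fun t => by
      apply ObjectProperty.hom_ext; apply ModuleCat.hom_ext
      exact hcomm t⟩
    obtain ⟨μ, hμ⟩ := CategoryTheory.endomorphism_simple_eq_smul_id ℂ F
    refine ⟨μ, ?_⟩
    have hhom : (μ • (𝟙 p.τ : p.τ ⟶ p.τ)).hom = F.hom := congrArg Action.Hom.hom hμ
    rw [Action.smul_hom] at hhom
    apply LinearMap.ext
    intro v
    have hAσ : A * σt g = σt' g := by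
      rw [hA, mul_assoc, ← map_mul, inv_mul_cancel, map_one, mul_one]
    have h5 : σt' g v = A (σt g v) := by
      calc σt' g v = (A * σt g) v := by rw [hAσ]
        _ = A (σt g v) := rfl
    have h6 : A (σt g v) = μ • (σt g v) := by
      have h7 : F.hom.hom.hom = A := rfl
      rw [← h7, ← hhom]
      rfl
    rw [h5, h6]
    rfl
  choose μ hμ using key
  have hone : μ 1 = 1 := by
    apply hcancel (μ 1) 1 1
    rw [← hμ 1, one_smul, map_one, map_one]
  have hmul : ∀ g h, μ (g * h) = μ g * μ h := by
    intro g h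
    apply hcancel _ _ (g * h)
    rw [← hμ (g * h), map_mul, map_mul, hμ g, hμ h, smul_mul_assoc, mul_smul_comm,
      smul_smul]
  have hdeg : ∀ g₁ g₂ : ↥(Zd p.x), η (g₁ : Δ) = η (g₂ : Δ) → μ g₁ = μ g₂ := by
    intro g₁ g₂ hηg
    have hmemK : ((g₁ * g₂⁻¹ : ↥(Zd p.x)) : Δ) ∈ Kd η p.x := by
      refine ⟨Subgroup.mul_mem _ g₁.2 (Subgroup.inv_mem _ g₂.2), ?_⟩
      show η ((g₁ * g₂⁻¹ : ↥(Zd p.x)) : Δ) = 1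
      rw [Subgroup.coe_mul, InvMemClass.coe_inv, map_mul, map_inv, hηg, mul_inv_cancel]
    have hK1 : μ (Subgroup.inclusion inf_le_left (⟨_, hmemK⟩ : ↥(Kd η p.x))) = 1 := by
      apply hcancel _ 1 _
      rw [← hμ _, one_smul, hσt'_ext, hσt_ext]
    have hsplit : g₁ = (Subgroup.inclusion inf_le_left (⟨_, hmemK⟩ : ↥(Kd η p.x))) * g₂ := by
      apply Subtype.ext
      simp only [Subgroup.coe_mul, Subgroup.coe_inclusion, InvMemClass.coe_inv]
      group
    rw [hsplit, hmul, hK1, one_mul]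
  exact ⟨μ, hμ, hmul, hdeg, hone, hcancel⟩

end Schur

/-- **Statement 10.** Let `η : Δ → ℤ` be a ℤ-grading and `(x,σ) ∈ M^0_η(Δ)`.  If
`ξ, ξ' ∈ Δ*`, `σ̃` is an extension of `σ` to `Z_Δ(x)` on which `ξ` acts as the identity
and `σ̃'` is an extension of `σ` to `Z_Δ(x)` on which `ξ'` acts as the identity, then
`(x,σ)^_{ξ',σ̃'}` equals `(x,σ)^_{ξ,σ̃}` times a root of unity. -/
theorem hat_independent_of_choices
    {Δ : Type} [Group Δ] (η : Δ →* Multiplicative ℤ)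
    (hsurj : Function.Surjective η) (hker : Finite η.ker)
    (p : PairD η 0)
    (ξ ξ' : Δ) (hξ : ξ ∈ DeltaStar η) (hξ' : ξ' ∈ DeltaStar η)
    (σt : Representation ℂ ↥(Zd p.x) ↥p.τ)
    (hσt_ext : ∀ t : ↥(Kd η p.x), σt (Subgroup.inclusion inf_le_left t) = p.τ.ρ t)
    (hσt_ξ : σt ⟨ξ, central_mem_Zd hξ.1 p.x⟩ = 1)
    (σt' : Representation ℂ ↥(Zd p.x) ↥p.τ)
    (hσt'_ext : ∀ t : ↥(Kd η p.x), σt' (Subgroup.inclusion inf_le_left t) = p.τ.ρ t)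
    (hσt'_ξ : σt' ⟨ξ', central_mem_Zd hξ'.1 p.x⟩ = 1) :
    ∃ ω : ℂ, (∃ n : ℕ, 1 ≤ n ∧ ω ^ n = 1) ∧
      hatFn η p.x ξ' hξ'.1 σt' = ω • hatFn η p.x ξ hξ.1 σt := by
  classical
  obtain ⟨y0, c, hy0, hc1, hyc⟩ := hξ.2
  obtain ⟨y0', c', hy0', hc1', hyc'⟩ := hξ'.2
  have hofadd : ∀ cc : ℕ, (Multiplicative.ofAdd (1:ℤ)) ^ cc = Multiplicative.ofAdd (cc : ℤ) := by
    intro cc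
    rw [← ofAdd_nsmul]
    norm_num
  have hcξ : η ξ = Multiplicative.ofAdd ((c : ℕ) : ℤ) := by
    rw [← hyc, map_pow, hy0, hofadd]
  have hcξ' : η ξ' = Multiplicative.ofAdd ((c' : ℕ) : ℤ) := by
    rw [← hyc', map_pow, hy0', hofadd]
  have hc1z : (1:ℤ) ≤ ((c : ℕ) : ℤ) := by exact_mod_cast hc1
  have hc1z' : (1:ℤ) ≤ ((c' : ℕ) : ℤ) := by exact_mod_cast hc1'
  obtain ⟨zx, hzx, hzx1⟩ := p.hne
  obtain ⟨μ, hμ, hmul, hdeg, hone, hcancel⟩ := schur_mu η p σt σt' hσt_ext hσt'_ext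
  have hμpow : ∀ (g : ↥(Zd p.x)) (n : ℕ), μ (g ^ n) = μ g ^ n := by
    intro g n
    induction n with
    | zero => rw [pow_zero, pow_zero, hone]
    | succ n ih => rw [pow_succ, pow_succ, hmul, ih]
  -- the order of the kernel element
  haveI : Finite η.ker := hker
  have hδker : ξ ^ c' * (ξ' ^ c)⁻¹ ∈ η.ker := by
    rw [MonoidHom.mem_ker]
    apply eta_eq_one_of_toAdd
    simp only [map_mul, map_inv, map_pow, hcξ, hcξ', toAdd_mul, toAdd_inv, toAdd_pow,
      toAdd_ofAdd, smul_eq_mul]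
    ring
  set N : ℕ := orderOf (⟨_, hδker⟩ : η.ker) with hNdef
  have hN1 : 1 ≤ N := orderOf_pos (⟨_, hδker⟩ : η.ker)
  have hNpow : (ξ ^ c' * (ξ' ^ c)⁻¹) ^ N = 1 := by
    have h := pow_orderOf_eq_one (⟨_, hδker⟩ : η.ker)
    rw [← hNdef] at h
    have h2 := congrArg (fun t : η.ker => (t : Δ)) h
    simpa only [SubgroupClass.coe_pow, OneMemClass.coe_one] using h2
  have hcommξ : Commute ξ ξ' := ((Subgroup.mem_center_iff.mp hξ.1 ξ')).symm
  have hzeta : ξ ^ (c' * N) = ξ' ^ (c * N) := by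
    have hcomm2 : Commute (ξ ^ c') ((ξ' ^ c)⁻¹) := ((hcommξ.pow_pow c' c)).inv_right
    have h3 := hcomm2.mul_pow N
    rw [hNpow] at h3
    have h4 : (ξ ^ c') ^ N * (((ξ' ^ c)) ^ N)⁻¹ = 1 := by
      rw [← inv_pow]
      exact h3.symm
    rw [mul_inv_eq_one] at h4
    rw [← pow_mul, ← pow_mul] at h4
    rw [mul_comm c' N, mul_comm c N] at h4
    rw [mul_comm c' N, mul_comm c N]
    exact h4
  have hζcent : ξ ^ (c' * N) ∈ Subgroup.center Δ := Subgroup.pow_mem _ hξ.1 _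
  -- μ at the common central power is 1
  set ξZ : ↥(Zd p.x) := ⟨ξ, central_mem_Zd hξ.1 p.x⟩ with hξZ
  set ξ'Z : ↥(Zd p.x) := ⟨ξ', central_mem_Zd hξ'.1 p.x⟩ with hξ'Z
  set zZ : ↥(Zd p.x) := ⟨zx, hzx⟩ with hzZ
  have hσtζ : σt (ξZ ^ (c' * N)) = 1 := by rw [map_pow, hσt_ξ, one_pow]
  have hel : ξZ ^ (c' * N) = ξ'Z ^ (c * N) := by
    apply Subtype.ext
    rw [SubmonoidClass.coe_pow, SubmonoidClass.coe_pow]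
    exact hzeta
  have hσt'ζ : σt' (ξZ ^ (c' * N)) = 1 := by rw [hel, map_pow, hσt'_ξ, one_pow]
  have hμζ : μ (ξZ ^ (c' * N)) = 1 := by
    apply hcancel _ 1 1
    rw [map_one, one_smul]
    have h := hμ (ξZ ^ (c' * N))
    rw [hσtζ, hσt'ζ] at h
    exact h.symm
  -- the root of unity
  have hlam : μ zZ ^ (c * c' * N) = 1 := by
    rw [← hμpow]
    have hη : η ((zZ ^ (c * c' * N) : ↥(Zd p.x)) : Δ) = η ((ξZ ^ (c' * N) : ↥(Zd p.x)) : Δ) := by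
      rw [SubmonoidClass.coe_pow, SubmonoidClass.coe_pow]
      show η (zx ^ (c * c' * N)) = η (ξ ^ (c' * N))
      rw [map_pow, map_pow, hzx1, hcξ, hofadd, ← ofAdd_nsmul]
      congr 1
      simp only [nsmul_eq_mul]
      push_cast
      ring
    rw [hdeg _ _ hη, hμζ]
  -- step 1 : change σt' to σt
  haveI hfinξ' : Finite (Δ ⧸ Subgroup.zpowers ξ') :=
    quot_zpowers_finite η hker ξ' zx ((c' : ℕ) : ℤ) hcξ' hc1z' hzx1
      (fun a => (Subgroup.mem_center_iff.mp hξ'.1 a).symm)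
  have hstep1 : hatFn η p.x ξ' hξ'.1 σt' = (μ zZ) • hatFn η p.x ξ' hξ'.1 σt := by
    funext m
    rw [Pi.smul_apply, smul_eq_mul]
    simp only [hatFn]
    rw [mul_finsum _ _]
    apply finsum_congr
    intro w
    by_cases hcond : p.x * (w.out * m.out.x * w.out⁻¹) = (w.out * m.out.x * w.out⁻¹) * p.x
    · rw [if_pos hcond, if_pos hcond]
      have hg1 : (w.out * m.out.x * w.out⁻¹) ∈ Zd p.x :=
        Subgroup.mem_centralizer_iff.mpr (by rintro u rfl; exact hcond)
      have htr : repTrace p.x σt' (w.out * m.out.x * w.out⁻¹)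
          = μ zZ * repTrace p.x σt (w.out * m.out.x * w.out⁻¹) := by
        simp only [repTrace]
        rw [dif_pos hg1, dif_pos hg1]
        have hμg : μ ⟨w.out * m.out.x * w.out⁻¹, hg1⟩ = μ zZ := by
          apply hdeg
          show η (w.out * m.out.x * w.out⁻¹) = η (zx : Δ)
          rw [eta_conj η w.out m.out.x, m.out.hx, hzx1]
        rw [hμ ⟨w.out * m.out.x * w.out⁻¹, hg1⟩, LinearMap.map_smul, hμg, smul_eq_mul]
      rw [htr]
      ring
    · rw [if_neg hcond, if_neg hcond, mul_zero]
  -- step 2 : change ξ' to ξ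
  have hkN1 : 1 ≤ c * N := Nat.one_le_iff_ne_zero.mpr (by positivity)
  have hkN1' : 1 ≤ c' * N := Nat.one_le_iff_ne_zero.mpr (by positivity)
  have hstep2 : hatFn η p.x ξ' hξ'.1 σt = hatFn η p.x ξ hξ.1 σt := by
    have hA := hatFn_pow η hker p.x zx hzx hzx1 ξ' hξ'.1 ((c' : ℕ) : ℤ) hcξ' hc1z'
      (c * N) hkN1 (ξ ^ (c' * N)) hzeta hζcent σt
    have hB := hatFn_pow η hker p.x zx hzx hzx1 ξ hξ.1 ((c : ℕ) : ℤ) hcξ hc1z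
      (c' * N) hkN1' (ξ ^ (c' * N)) rfl hζcent σt
    exact hA.symm.trans hB
  refine ⟨μ zZ, ⟨c * c' * N, Nat.one_le_iff_ne_zero.mpr (by positivity), hlam⟩, ?_⟩
  rw [hstep1, hstep2]
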